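/- Let EF be a contracting, c-bounded evolution frame with finite event class EC, let S be a successor-closed set of knowledge states with finitely many distinct initial knowledge bases, and suppose every compilation comp_EF(s) for s ∈ S contains only rules from a fixed finite set R_0. Then canonical equivalence ≡^can_EF has finite index with respect to S. -/

import Mathlib

structure KState (Rule Event : Type) : Type where
  kb : Set Rule
  events : List Event

/-- Append a sequence of events to a knowledge state. -/
def KState.append {Rule Event : Type} (s : KState Rule Event) (es : List Event) :
    KState Rule Event := ⟨s.kb, s.events ++ es⟩

/-- All events of the list belong to the event class `EC`. -/
def InEC {Event : Type} (EC : Set Event) (es : List Event) : Prop := ∀ E ∈ es, E ∈ EC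

/-- Strong equivalence of knowledge states with respect to belief operator `B`. -/
def StrongEquiv {Rule Event : Type} (B : KState Rule Event → Set Rule) (EC : Set Event)
    (s s' : KState Rule Event) : Prop :=
  ∀ es : List Event, InEC EC es → B (s.append es) = B (s'.append es)

/-- k-equivalence of knowledge states. -/
def KEquiv {Rule Event : Type} (B : KState Rule Event → Set Rule) (EC : Set Event) (k : ℕ)
    (s s' : KState Rule Event) : Prop :=
  ∀ es : List Event, InEC EC es → es.length ≤ k → B (s.append es) = B (s'.append es)

/-- The equivalence class of `s` within `S` under the relation `R`. -/
def cls {α : Type} (R : α → α → Prop) (S : Set α) (s : α) : Set α := {t ∈ S | R s t}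

/-- The relation `R` has finite index with respect to `S`:
    it partitions `S` into finitely many classes. -/
def FiniteIndex {α : Type} (R : α → α → Prop) (S : Set α) : Prop :=
  (cls R S '' S).Finite

/-- `S` is closed under taking successor knowledge states (one per event of `EC`). -/
def SuccClosed {Rule Event : Type} (EC : Set Event) (S : Set (KState Rule Event)) : Prop :=
  ∀ s ∈ S, ∀ E ∈ EC, s.append [E] ∈ S

/-- One reduction step on an update sequence (a list of finite programs): either
    remove a rule from a component that also occurs in a later component, or remove
    an empty component program. -/
inductive RedStep {Rule : Type} [DecidableEq Rule] :
    List (Finset Rule) → List (Finset Rule) → Prop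
  | dup (Ps : List (Finset Rule)) (i j : ℕ) (r : Rule) (hij : i < j) (hj : j < Ps.length)
      (hri : r ∈ Ps.getD i ∅) (hrj : r ∈ Ps.getD j ∅) :
      RedStep Ps (Ps.set i ((Ps.getD i ∅).erase r))
  | empty (Ps : List (Finset Rule)) (i : ℕ) (hi : i < Ps.length) (he : Ps.getD i ∅ = ∅) :
      RedStep Ps (Ps.eraseIdx i)

/-- An update sequence is irreducible (canonical) if no reduction step applies. -/
def IrreducibleSeq {Rule : Type} [DecidableEq Rule] (Ps : List (Finset Rule)) : Prop :=
  ∀ Qs, ¬ RedStep Ps Qs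

/-- `Bel` is a contracting belief operator: (i) deleting an empty component program
    leaves the belief set unchanged, and (ii) deleting a rule from a component that
    also occurs in a later component leaves the belief set unchanged. -/
def Contracting {Rule : Type} [DecidableEq Rule]
    (Bel : List (Finset Rule) → Set Rule) : Prop :=
  (∀ P P' : List (Finset Rule), Bel (P ++ [∅] ++ P') = Bel (P ++ P')) ∧
  (∀ (Ps : List (Finset Rule)) (i j : ℕ) (r : Rule), i < j → j < Ps.length →
      r ∈ Ps.getD i ∅ → r ∈ Ps.getD j ∅ →
      Bel (Ps.set i ((Ps.getD i ∅).erase r)) = Bel Ps)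

open Classical in
/-- The compilation determined by the update policy `Pi` and the realization
    assignment `rho`: the initial knowledge base is compiled by `rho` with no actions,
    and a state with last event `E` is compiled by applying `rho` to the actions that
    `Pi` selects at the predecessor state for `E`. -/
noncomputable def compOf {Rule Event Action : Type}
    (Pi : KState Rule Event → Event → Set Action)
    (rho : KState Rule Event → Set Action → List (Finset Rule))
    (s : KState Rule Event) : List (Finset Rule) :=
  if h : s.events = [] then rho s ∅
  else rho ⟨s.kb, s.events.dropLast⟩ (Pi ⟨s.kb, s.events.dropLast⟩ (s.events.getLast h))

/-- The last `min (|s|, c)` events of the knowledge state `s`. -/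
def lastEvents {Rule Event : Type} (c : ℕ) (s : KState Rule Event) : List Event :=
  s.events.drop (s.events.length - c)

/-- The evolution frame is `c`-bounded: the update policy and the realization
    assignment at `s` depend only on the belief set of `s` and the last
    `min (|s|, c)` events of `s`. -/
def CBounded {Rule Event Action : Type} (c : ℕ)
    (Pi : KState Rule Event → Event → Set Action)
    (rho : KState Rule Event → Set Action → List (Finset Rule))
    (BelS : KState Rule Event → Set Rule) : Prop :=
  ∃ (f : Set Rule → List Event → Event → Set Action)
    (g : Set Rule → List Event → Set Action → List (Finset Rule)),
    (∀ s E, Pi s E = f (BelS s) (lastEvents c s) E) ∧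
    (∀ s A, rho s A = g (BelS s) (lastEvents c s) A)

section Aux

theorem KState.append_nil' {Rule Event : Type} (s : KState Rule Event) :
    s.append [] = s := by
  cases s; simp [KState.append]

theorem KState.append_cons' {Rule Event : Type} (s : KState Rule Event) (E : Event)
    (es : List Event) : s.append (E :: es) = (s.append [E]).append es := by
  simp [KState.append]

theorem KState.append_append' {Rule Event : Type} (s : KState Rule Event)
    (a b : List Event) : s.append (a ++ b) = (s.append a).append b := by
  simp [KState.append]

theorem finite_bounded_lists {α : Type*} {A : Set α} (hA : A.Finite) (n : ℕ) :
    {l : List α | (∀ x ∈ l, x ∈ A) ∧ l.length ≤ n}.Finite := by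
  haveI := hA.to_subtype
  have h1 : {l : List ↥A | l.length ≤ n}.Finite := List.finite_length_le ↥A n
  apply (h1.image (List.map Subtype.val)).subset
  rintro l ⟨hmem, hlen⟩
  refine ⟨l.pmap (fun x hx => ⟨x, hx⟩) hmem, ?_, ?_⟩
  · simpa [List.length_pmap] using hlen
  · simp [List.map_pmap]

theorem redStep_bel {Rule : Type} [DecidableEq Rule] {Bel : List (Finset Rule) → Set Rule}
    (hc : Contracting Bel) {Ps Qs : List (Finset Rule)} (h : RedStep Ps Qs) :
    Bel Qs = Bel Ps := by
  cases h with
  | dup i j r hij hj hri hrj => exact hc.2 _ i j r hij hj hri hrj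
  | empty i hi he =>
    have hPs : Ps = Ps.take i ++ [∅] ++ Ps.drop (i + 1) := by
      have h0 : Ps[i] = (∅ : Finset Rule) := by
        rw [← List.getD_eq_getElem Ps ∅ hi]; exact he
      conv_lhs => rw [← List.take_append_drop i Ps, List.drop_eq_getElem_cons hi, h0]
      simp
    rw [List.eraseIdx_eq_take_drop_succ]
    conv_rhs => rw [hPs]
    exact (hc.1 _ _).symm

theorem redStep_sub {Rule : Type} [DecidableEq Rule] {Ps Qs : List (Finset Rule)}
    {R0 : Finset Rule} (h : RedStep Ps Qs) (hsub : ∀ P ∈ Ps, P ⊆ R0) :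
    ∀ P ∈ Qs, P ⊆ R0 := by
  cases h with
  | dup i j r hij hj hri hrj =>
    intro P hP
    rcases List.mem_or_eq_of_mem_set hP with h' | rfl
    · exact hsub _ h'
    · refine (Finset.erase_subset _ _).trans ?_
      rw [List.getD_eq_getElem Ps ∅ (hij.trans hj)]
      exact hsub _ (List.getElem_mem _)
  | empty i hi he => exact fun P hP => hsub _ (List.mem_of_mem_eraseIdx hP)

theorem irreducible_length_le {Rule : Type} [DecidableEq Rule] {Ps : List (Finset Rule)}
    {R0 : Finset Rule} (hirr : IrreducibleSeq Ps) (hsub : ∀ P ∈ Ps, P ⊆ R0) :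
    Ps.length ≤ R0.card := by
  classical
  have hne : ∀ i : Fin Ps.length, (Ps.getD i ∅).Nonempty := by
    intro i
    rcases Finset.eq_empty_or_nonempty (Ps.getD i ∅) with he | h
    · exact absurd (RedStep.empty Ps i i.2 he) (hirr _)
    · exact h
  choose x hx using hne
  have hxR0 : ∀ i : Fin Ps.length, x i ∈ R0 := by
    intro i
    have : Ps.getD i ∅ ⊆ R0 := by
      rw [List.getD_eq_getElem Ps ∅ i.2]
      exact hsub _ (List.getElem_mem _)
    exact this (hx i)
  have hinj : Function.Injective (fun i : Fin Ps.length => (⟨x i, hxR0 i⟩ : ↥R0)) := by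
    intro i j hij
    simp only [Subtype.mk.injEq] at hij
    by_contra hne'
    rcases lt_or_gt_of_ne (fun h => hne' (Fin.ext h)) with h | h
    · exact hirr _ (RedStep.dup Ps i j (x i) h j.2 (hx i) (hij ▸ hx j))
    · exact hirr _ (RedStep.dup Ps j i (x j) h i.2 (hx j) (hij ▸ hx i))
  have := Fintype.card_le_of_injective _ hinj
  simpa using this

theorem drop_sub_append {α : Type*} (L : List α) (E : α) (c : ℕ) :
    (L ++ [E]).drop ((L ++ [E]).length - c) =
      (L.drop (L.length - c) ++ [E]).drop ((L.drop (L.length - c) ++ [E]).length - c) := by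
  rcases le_or_gt c L.length with hle | hlt
  · rcases Nat.eq_zero_or_pos c with rfl | hc
    · rw [List.drop_eq_nil_of_le (by simp), List.drop_eq_nil_of_le (by simp)]
    · have e1 : (L ++ [E]).length - c = (L.length - c) + 1 := by simp; omega
      have e2 : (L.drop (L.length - c) ++ [E]).length - c = 1 := by
        simp only [List.length_append, List.length_drop, List.length_cons,
          List.length_nil]
        omega
      rw [e1, e2, List.drop_append_of_le_length (by omega),
        List.drop_append_of_le_length (by rw [List.length_drop]; omega), List.drop_drop]
  · have e1 : L.length - c = 0 := by omega
    rw [e1, List.drop_zero]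

theorem lastEvents_append_singleton {Rule Event : Type} (c : ℕ) (s : KState Rule Event)
    (E : Event) :
    lastEvents c (s.append [E]) =
      ((lastEvents c s) ++ [E]).drop (((lastEvents c s) ++ [E]).length - c) :=
  drop_sub_append s.events E c

theorem lastEvents_append_full {Rule Event : Type} (c : ℕ) (s : KState Rule Event)
    {es : List Event} (h : es.length = c) : lastEvents c (s.append es) = es := by
  simp only [lastEvents, KState.append, List.length_append, h, Nat.add_sub_cancel]
  exact List.drop_left

end Aux

/-- For a contracting, `c`-bounded evolution frame with finite event
    class, a successor-closed set `S` of knowledge states with finitely many distinct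
    initial knowledge bases, and compilations built from rules of a fixed finite set
    `R0`, canonical equivalence (strong equivalence in the canonized frame) has finite
    index with respect to `S`. -/
theorem canonical_equiv_finiteIndex {Rule Event Action : Type} [DecidableEq Rule]
    (Bel : List (Finset Rule) → Set Rule) (EC : Set Event)
    (Pi : KState Rule Event → Event → Set Action)
    (rho : KState Rule Event → Set Action → List (Finset Rule))
    (canon : List (Finset Rule) → List (Finset Rule))
    (hcanon : ∀ Ps : List (Finset Rule),
        Relation.ReflTransGen RedStep Ps (canon Ps) ∧ IrreducibleSeq (canon Ps))
    (S : Set (KState Rule Event)) (c : ℕ) (R0 : Finset Rule)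
    (hc : Contracting Bel)
    (hb : CBounded c Pi rho (fun s => Bel (compOf Pi rho s)))
    (hEC : EC.Finite) (hS : SuccClosed EC S)
    (hkb : (KState.kb '' S).Finite)
    (hR0 : ∀ s ∈ S, ∀ P ∈ compOf Pi rho s, P ⊆ R0) :
    FiniteIndex (StrongEquiv (fun s => Bel (canon (compOf Pi rho s))) EC) S := by
    classical
  obtain ⟨f, g, hf, hg⟩ := hb
  -- Bel is invariant under reduction
  have hbel_red : ∀ {Ps Qs : List (Finset Rule)}, Relation.ReflTransGen RedStep Ps Qs →
      Bel Qs = Bel Ps := by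
    intro Ps Qs h
    induction h with
    | refl => rfl
    | tail _ h2 ih => exact (redStep_bel hc h2).trans ih
  have hBcanon : ∀ s : KState Rule Event,
      Bel (canon (compOf Pi rho s)) = Bel (compOf Pi rho s) :=
    fun s => hbel_red (hcanon _).1
  have hsub_pres : ∀ {Ps Qs : List (Finset Rule)}, Relation.ReflTransGen RedStep Ps Qs →
      (∀ P ∈ Ps, P ⊆ R0) → ∀ P ∈ Qs, P ⊆ R0 := by
    intro Ps Qs h
    induction h with
    | refl => exact fun h' => h'
    | tail _ h2 ih => exact fun h' => redStep_sub h2 (ih h')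
  -- the finite set of possible belief values
  set V : Set (Set Rule) :=
    Bel '' {Ps : List (Finset Rule) | (∀ P ∈ Ps, P ∈ {P : Finset Rule | P ⊆ R0}) ∧
      Ps.length ≤ R0.card} with hV
  have hR0fin : {P : Finset Rule | P ⊆ R0}.Finite :=
    Set.Finite.ofFinset R0.powerset (by simp [Finset.mem_powerset])
  have hVfin : V.Finite := (finite_bounded_lists hR0fin R0.card).image Bel
  have hval : ∀ s ∈ S, Bel (compOf Pi rho s) ∈ V := by
    intro s hs
    rw [← hBcanon s]
    exact ⟨canon (compOf Pi rho s),
      ⟨hsub_pres (hcanon _).1 (hR0 s hs),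
        irreducible_length_le (hcanon _).2 (hsub_pres (hcanon _).1 (hR0 s hs))⟩, rfl⟩
  -- one-step description of the compilation
  have hstep : ∀ (s : KState Rule Event) (E : Event),
      compOf Pi rho (s.append [E]) =
        g (Bel (compOf Pi rho s)) (lastEvents c s)
          (f (Bel (compOf Pi rho s)) (lastEvents c s) E) := by
    intro s E
    have hne : (s.append [E]).events ≠ [] := by simp [KState.append]
    rw [compOf, dif_neg hne]
    have h1 : (s.append [E]).events.dropLast = s.events := by simp [KState.append]
    have h2 : (s.append [E]).events.getLast hne = E := by
      simp [KState.append, List.getLast_append]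
    have h3 : (⟨(s.append [E]).kb, (s.append [E]).events.dropLast⟩ : KState Rule Event)
        = s := by
      cases s; simp [KState.append]
    rw [h2, h3, hg, hf]
  -- key propagation lemma
  have hkey : ∀ (es : List Event) (s t : KState Rule Event),
      Bel (compOf Pi rho s) = Bel (compOf Pi rho t) → lastEvents c s = lastEvents c t →
      Bel (compOf Pi rho (s.append es)) = Bel (compOf Pi rho (t.append es)) := by
    intro es
    induction es with
    | nil => intro s t h1 _; simpa [KState.append_nil'] using h1
    | cons E es ih =>
      intro s t h1 h2
      rw [KState.append_cons', KState.append_cons' t]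
      apply ih
      · rw [hstep s E, hstep t E, h1, h2]
      · rw [lastEvents_append_singleton, lastEvents_append_singleton, h2]
  -- S is closed under appending EC-event lists
  have hSapp : ∀ (es : List Event), InEC EC es → ∀ s ∈ S, s.append es ∈ S := by
    intro es
    induction es with
    | nil => intro _ s hs; simpa [KState.append_nil'] using hs
    | cons E es ih =>
      intro h s hs
      rw [KState.append_cons']
      exact ih (fun x hx => h x (List.mem_cons_of_mem _ hx)) _
        (hS s hs E (h E List.mem_cons_self))
  -- the finite invariant
  set De : Set (List Event) := {es | (∀ x ∈ es, x ∈ EC) ∧ es.length ≤ c} with hDe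
  have hDefin : De.Finite := finite_bounded_lists hEC c
  haveI : Finite ↥De := hDefin.to_subtype
  set Φ : KState Rule Event → (↥De → Set Rule) :=
    fun s d => Bel (compOf Pi rho (s.append d.1)) with hΦ
  have hΦfin : (Φ '' S).Finite := by
    apply (Set.Finite.pi (fun _ : ↥De => hVfin)).subset
    rintro φ ⟨s, hs, rfl⟩
    rw [Set.mem_univ_pi]
    intro d
    exact hval _ (hSapp d.1 d.2.1 s hs)
  -- same invariant implies same beliefs along all EC futures
  have hmain : ∀ s ∈ S, ∀ t ∈ S, Φ s = Φ t → ∀ es : List Event, InEC EC es →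
      Bel (compOf Pi rho (s.append es)) = Bel (compOf Pi rho (t.append es)) := by
    intro s hs t ht hφ es hes
    rcases le_or_gt es.length c with hle | hlt
    · exact congrFun hφ ⟨es, hes, hle⟩
    · have hlen : (es.take c).length = c := by rw [List.length_take]; omega
      have e1 : ∀ u : KState Rule Event,
          u.append es = (u.append (es.take c)).append (es.drop c) := by
        intro u; rw [← KState.append_append', List.take_append_drop]
      rw [e1 s, e1 t]
      apply hkey
      · exact congrFun hφ ⟨es.take c,
          fun E hE => hes E ((List.take_sublist c es).subset hE), le_of_eq hlen⟩
      · rw [lastEvents_append_full c s hlen, lastEvents_append_full c t hlen]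
  set R := StrongEquiv (fun s => Bel (canon (compOf Pi rho s))) EC with hR
  have hRst : ∀ s ∈ S, ∀ t ∈ S, Φ s = Φ t → R s t := by
    intro s hs t ht hφ es hes
    simp only [KState.append]
    rw [hBcanon, hBcanon]
    exact hmain s hs t ht hφ es hes
  have hcls : ∀ s ∈ S, ∀ t ∈ S, Φ s = Φ t → cls R S s = cls R S t := by
    intro s hs t ht hφ
    have hst : R s t := hRst s hs t ht hφ
    ext u
    simp only [cls, Set.mem_setOf_eq]
    constructor
    · rintro ⟨hu, h⟩
      exact ⟨hu, fun es hes => (hst es hes).symm.trans (h es hes)⟩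
    · rintro ⟨hu, h⟩
      exact ⟨hu, fun es hes => (hst es hes).trans (h es hes)⟩
  -- conclude
  set G : (↥De → Set Rule) → Set (KState Rule Event) :=
    fun φ => if h : ∃ t, t ∈ S ∧ Φ t = φ then cls R S h.choose else ∅ with hG
  apply (hΦfin.image G).subset
  rintro u ⟨s, hs, rfl⟩
  refine ⟨Φ s, ⟨s, hs, rfl⟩, ?_⟩
  have hex : ∃ t, t ∈ S ∧ Φ t = Φ s := ⟨s, hs, rfl⟩
  simp only [hG, dif_pos hex]
  exact hcls _ hex.choose_spec.1 _ hs hex.choose_spec.2
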